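/- Let v0 > 1 and let R(v0) denote the unique real number r with -1 ≤ r < 0 satisfying r·exp(r) = -v0·exp(-v0). Then x = v0 + R(v0) is positive and is the unique positive solution of the equation v0 = x/(1 - exp(-x)). -/
import Mathlib

lemma teT_strictMono : StrictMonoOn (fun t : ℝ => t * Real.exp t) (Set.Ici (-1)) := by
  apply strictMonoOn_of_deriv_pos (convex_Ici _)
  · exact (continuous_id.mul Real.continuous_exp).continuousOn
  · intro t ht
    rw [interior_Ici] at ht
    have hd : HasDerivAt (fun t : ℝ => t * Real.exp t) (1 * Real.exp t + t * Real.exp t) t :=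
      (hasDerivAt_id t).mul (Real.hasDerivAt_exp t)
    rw [hd.deriv]
    have he : 0 < Real.exp t := Real.exp_pos t
    have : -1 < t := ht
    nlinarith

/-- For `v0 > 1`, with `r = R(v0)` (the value in `[-1, 0)` with `r·eʳ = -v0·e^{-v0}`),
`x = v0 + r` is positive and is the unique positive solution of
`v0 = x/(1 - exp(-x))`. -/
theorem stmt2 (v0 r : ℝ) (hv0 : 1 < v0) (hr1 : -1 ≤ r) (hr2 : r < 0)
    (hre : r * Real.exp r = -v0 * Real.exp (-v0)) :
    0 < v0 + r ∧
    v0 = (v0 + r) / (1 - Real.exp (-(v0 + r))) ∧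
    (∀ x : ℝ, 0 < x → v0 = x / (1 - Real.exp (-x)) → x = v0 + r) := by
  have hx : 0 < v0 + r := by linarith
  have hE : Real.exp (-(v0 + r)) < 1 := by
    rw [Real.exp_lt_one_iff]; linarith
  have hden : 1 - Real.exp (-(v0 + r)) ≠ 0 := by linarith
  -- r = -(v0 * exp(-(v0+r)))
  have hr' : r = -(v0 * Real.exp (-(v0 + r))) := by
    have h1 := congrArg (fun y => y * Real.exp (-r)) hre
    simp only [mul_assoc, ← Real.exp_add] at h1
    have e1 : r + -r = 0 := by ring
    have e2 : -v0 + -r = -(v0 + r) := by ring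
    rw [e1, e2, Real.exp_zero, mul_one] at h1
    linarith [h1]
  refine ⟨hx, ?_, ?_⟩
  · rw [eq_div_iff hden, mul_sub, mul_one]
    linarith
  · intro x hx0 hxe
    have hEx : Real.exp (-x) < 1 := by rw [Real.exp_lt_one_iff]; linarith
    have hExpos : 0 < Real.exp (-x) := Real.exp_pos _
    have hdenx : 1 - Real.exp (-x) ≠ 0 := by linarith
    have hmul : v0 * (1 - Real.exp (-x)) = x := by
      rw [hxe]; field_simp
    have hrv : x - v0 = -(v0 * Real.exp (-x)) := by
      rw [mul_sub, mul_one] at hmul; linarith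
    -- v0 < exp x
    have hxe1 : x + 1 < Real.exp x := Real.add_one_lt_exp (ne_of_gt hx0)
    have hEinv : Real.exp (-x) * Real.exp x = 1 := by
      rw [← Real.exp_add]; simp
    have hvlt : v0 < Real.exp x := by
      by_contra h
      push_neg at h
      have h1 : Real.exp x * (1 - Real.exp (-x)) ≤ v0 * (1 - Real.exp (-x)) := by
        apply mul_le_mul_of_nonneg_right h; linarith
      rw [mul_sub, mul_one] at h1
      nlinarith
    have hlt1 : v0 * Real.exp (-x) < 1 := by
      have := mul_lt_mul_of_pos_left hvlt hExpos
      nlinarith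
    have hge : -1 < x - v0 := by rw [hrv]; linarith
    have hre' : (x - v0) * Real.exp (x - v0) = -v0 * Real.exp (-v0) := by
      have harg : -x + (x - v0) = -v0 := by ring
      calc (x - v0) * Real.exp (x - v0)
          = -(v0 * (Real.exp (-x) * Real.exp (x - v0))) := by rw [hrv]; ring
        _ = -v0 * Real.exp (-v0) := by rw [← Real.exp_add, harg]; ring
    have hinj := teT_strictMono.injOn
    have heq : x - v0 = r := by
      apply hinj (Set.mem_Ici.mpr (le_of_lt hge)) (Set.mem_Ici.mpr hr1)
      simp only []
      rw [hre', hre]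
    linarith
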